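/- For each n ∈ ℕ, let f(n) be the number of tuples (n₁,…,n_t) of integers with each n_i > 1 and n₁·…·n_t = n (ordered factorizations into factors > 1). Then there exists a constant d such that f(n) ≤ n^d for all n. -/

import Mathlib

/-- The type of ordered factorizations of `n` into factors `> 1`. -/
abbrev OFact (n : ℕ) : Type := {l : List ℕ // (∀ x ∈ l, 1 < x) ∧ l.prod = n}

lemma two_pow_length_le_prod (l : List ℕ) (h : ∀ x ∈ l, 1 < x) :
    2 ^ l.length ≤ l.prod := by
  induction l with
  | nil => simp
  | cons a t ih =>
    simp only [List.length_cons, List.prod_cons, pow_succ]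
    have ha : 2 ≤ a := h a (by simp)
    have ht : 2 ^ t.length ≤ t.prod := ih fun x hx => h x (by simp [hx])
    calc 2 ^ t.length * 2 ≤ t.prod * a := Nat.mul_le_mul ht ha
    _ = a * t.prod := Nat.mul_comm _ _

lemma finite_OFact (n : ℕ) (hn : 1 ≤ n) : Finite (OFact n) := by
  have : Set.Finite {l : List ℕ | (∀ x ∈ l, 1 < x) ∧ l.prod = n} := by
    apply Set.Finite.subset
      (Set.Finite.image (List.map (Fin.val (n := n + 1)))
        (List.finite_length_le (Fin (n + 1)) n))
    rintro l ⟨h1, h2⟩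
    have hle : ∀ x ∈ l, x ≤ n := fun x hx =>
      Nat.le_of_dvd hn (h2 ▸ List.dvd_prod hx)
    have hlen : l.length ≤ n := by
      have := two_pow_length_le_prod l h1
      have := Nat.lt_two_pow_self (n := l.length)
      omega
    refine ⟨l.map (fun x => (⟨x % (n + 1), Nat.mod_lt _ (by omega)⟩ : Fin (n + 1))), by
      simpa using hlen, ?_⟩
    rw [List.map_map]
    conv_rhs => rw [show l = l.map id from (List.map_id l).symm]
    apply List.map_congr_left
    intro x hx
    have hxn := hle x hx
    simp [Nat.mod_eq_of_lt (show x < n + 1 by omega)]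
  exact this.to_subtype

lemma nat_card_sigma {ι : Type*} [Fintype ι] (β : ι → Type*) [∀ i, Finite (β i)] :
    Nat.card (Σ i, β i) = ∑ i, Nat.card (β i) := by
  classical
  have : ∀ i, Fintype (β i) := fun i => Fintype.ofFinite _
  simp [Nat.card_eq_fintype_card, Fintype.card_sigma]

/-- The recursion: for `n ≥ 2`, the factorizations of `n` are given by a first
factor `d` (a divisor with `1 < d`) and a factorization of `n / d`. -/
lemma card_OFact_eq (n : ℕ) (hn : 2 ≤ n) :
    Nat.card (OFact n) =
      ∑ d ∈ (Nat.divisors n).filter (fun d => 1 < d), Nat.card (OFact (n / d)) := by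
  set D := (Nat.divisors n).filter (fun d => 1 < d) with hD
  have hinv : Function.Bijective
      (fun p : Σ d : D, OFact (n / (d : ℕ)) =>
        (⟨(p.1 : ℕ) :: p.2.1, by
          obtain ⟨⟨d, hd⟩, ⟨t, ht1, ht2⟩⟩ := p
          simp only [hD, Finset.mem_filter, Nat.mem_divisors] at hd
          constructor
          · intro x hx
            rcases List.mem_cons.mp hx with h | h
            · exact h ▸ hd.2
            · exact ht1 x h
          · simp only [List.prod_cons, ht2]
            exact Nat.mul_div_cancel' hd.1.1⟩ : OFact n)) := by
    constructor
    · rintro ⟨⟨d, hd⟩, ⟨t, ht⟩⟩ ⟨⟨d', hd'⟩, ⟨t', ht'⟩⟩ h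
      simp only [Subtype.mk.injEq, List.cons.injEq] at h
      obtain ⟨rfl, rfl⟩ := h
      rfl
    · rintro ⟨l, hl1, hl2⟩
      match l, hl1, hl2 with
      | [], hl1, hl2 => simp at hl2; omega
      | a :: t, hl1, hl2 =>
        have ha : 1 < a := hl1 a (by simp)
        have hdvd : a ∣ n := hl2 ▸ List.dvd_prod (by simp)
        have ht1 : ∀ x ∈ t, 1 < x := fun x hx => hl1 x (by simp [hx])
        have ht2 : t.prod = n / a := by
          simp only [List.prod_cons] at hl2
          exact (Nat.div_eq_of_eq_mul_left (by omega) (by rw [← hl2]; ring)).symm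
        refine ⟨⟨⟨a, ?_⟩, ⟨t, ht1, ht2⟩⟩, rfl⟩
        simp only [hD, Finset.mem_filter, Nat.mem_divisors]
        exact ⟨⟨hdvd, by omega⟩, ha⟩
  have hfin : ∀ d : D, Finite (OFact (n / (d : ℕ))) := by
    rintro ⟨d, hd⟩
    simp only [hD, Finset.mem_filter, Nat.mem_divisors] at hd
    obtain ⟨⟨hdvd, hn0⟩, hd1⟩ := hd
    have hdn : d ≤ n := Nat.le_of_dvd (by omega) hdvd
    exact finite_OFact _ (Nat.div_pos hdn (show 0 < d by omega))
  rw [← Nat.card_congr (Equiv.ofBijective _ hinv), nat_card_sigma]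
  exact Finset.sum_coe_sort D fun d => Nat.card (OFact (n / d))

lemma telescoping (n : ℕ) (hn : 1 ≤ n) :
    ∑ d ∈ Finset.Icc 2 n, (1 : ℚ) / (d * (d - 1)) = 1 - 1 / n := by
  induction n, hn using Nat.le_induction with
  | base => simp
  | succ n hn ih =>
    rw [Finset.sum_Icc_succ_top (by omega), ih]
    have h1 : (n : ℚ) ≠ 0 := by positivity
    have h2 : ((n : ℚ) + 1) ≠ 0 := by positivity
    push_cast
    field_simp
    ring_nf
    simp [h1]

lemma sum_sq_div_le (n : ℕ) (hn : 1 ≤ n) :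
    ∑ d ∈ Finset.Icc 2 n, (n / d) ^ 2 ≤ n ^ 2 := by
  have key : (↑(∑ d ∈ Finset.Icc 2 n, (n / d) ^ 2) : ℚ) ≤ (n : ℚ) ^ 2 := by
    push_cast
    calc ∑ d ∈ Finset.Icc 2 n, ((n / d : ℕ) : ℚ) ^ 2
        ≤ ∑ d ∈ Finset.Icc 2 n, (n : ℚ) ^ 2 * (1 / (d * (d - 1))) := by
          apply Finset.sum_le_sum
          intro d hd
          simp only [Finset.mem_Icc] at hd
          have hd2 : (2 : ℚ) ≤ (d : ℚ) := by exact_mod_cast hd.1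
          have hdpos : (0 : ℚ) < d := by linarith
          have h1 : ((n / d : ℕ) : ℚ) ≤ (n : ℚ) / d := Nat.cast_div_le
          have h0 : (0 : ℚ) ≤ ((n / d : ℕ) : ℚ) := Nat.cast_nonneg _
          have hsq : ((n / d : ℕ) : ℚ) ^ 2 ≤ ((n : ℚ) / d) ^ 2 := by
            apply pow_le_pow_left₀ h0 h1 2
          refine hsq.trans ?_
          rw [div_pow, mul_one_div]
          apply div_le_div_of_nonneg_left (by positivity) (by nlinarith) (by nlinarith)
      _ = (n : ℚ) ^ 2 * (1 - 1 / n) := by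
          rw [← Finset.mul_sum, telescoping n hn]
      _ ≤ (n : ℚ) ^ 2 := by
          have h2 : (0 : ℚ) ≤ (n : ℚ) ^ 2 * (1 / n) := by positivity
          nlinarith [h2]
  exact_mod_cast key

lemma card_OFact_le (n : ℕ) (hn : 1 ≤ n) : Nat.card (OFact n) ≤ n ^ 2 := by
  induction n using Nat.strong_induction_on with
  | _ n ih =>
    rcases eq_or_lt_of_le hn with h1 | h2
    · -- n = 1
      haveI : Unique (OFact n) := by
        refine ⟨⟨⟨[], by simp, by simp [← h1]⟩⟩, ?_⟩
        rintro ⟨l, hl1, hl2⟩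
        have : l = [] := by
          cases l with
          | nil => rfl
          | cons a t =>
            have ha : 1 < a := hl1 a (by simp)
            have hd : a ∣ 1 := by
              rw [h1, ← hl2]; exact List.dvd_prod (by simp)
            have := Nat.le_of_dvd one_pos hd
            omega
        subst this
        rfl
      rw [Nat.card_unique]
      exact Nat.one_le_pow _ _ (by omega)
    · -- n ≥ 2
      rw [card_OFact_eq n h2]
      calc ∑ d ∈ (Nat.divisors n).filter (fun d => 1 < d), Nat.card (OFact (n / d))
          ≤ ∑ d ∈ (Nat.divisors n).filter (fun d => 1 < d), (n / d) ^ 2 := by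
            apply Finset.sum_le_sum
            intro d hd
            simp only [Finset.mem_filter, Nat.mem_divisors] at hd
            have hdn : d ≤ n := Nat.le_of_dvd (by omega) hd.1.1
            have hpos : 1 ≤ n / d := Nat.div_pos hdn (by omega)
            have hlt : n / d < n := Nat.div_lt_self (by omega) hd.2
            exact ih _ hlt hpos
        _ ≤ ∑ d ∈ Finset.Icc 2 n, (n / d) ^ 2 := by
            apply Finset.sum_le_sum_of_subset
            intro d hd
            simp only [Finset.mem_filter, Nat.mem_divisors] at hd
            simp only [Finset.mem_Icc]
            exact ⟨hd.2, Nat.le_of_dvd (by omega) hd.1.1⟩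
        _ ≤ n ^ 2 := sum_sq_div_le n hn

/-- The number of ordered factorizations of `n` into integers greater than `1`
is polynomially bounded in `n`. -/
theorem ordered_factorizations_polynomially_bounded :
    ∃ d : ℕ, ∀ n : ℕ, 1 ≤ n →
      Nat.card {l : List ℕ // (∀ x ∈ l, 1 < x) ∧ l.prod = n} ≤ n ^ d := by
  exact ⟨2, fun n hn => card_OFact_le n hn⟩
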